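/- For an integer K ≥ 2, the function h(x) = x² / (1 - (1-x)^K (1 + Kx)) is strictly monotonically increasing on the interval (0,1]. -/

import Mathlib

open Set

theorem stmt_3 (K : ℕ) (hK : 2 ≤ K) :
    StrictMonoOn (fun x : ℝ => x ^ 2 / (1 - (1 - x) ^ K * (1 + K * x)))
      (Set.Ioc (0 : ℝ) 1) := by
  obtain ⟨m, rfl⟩ : ∃ m, K = m + 2 := ⟨K - 2, by omega⟩
  set c : ℝ := (m : ℝ) + 2 with hc
  have hcast : ((m + 2 : ℕ) : ℝ) = c := by push_cast [hc]; ring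
  -- abbreviations
  set D : ℝ → ℝ := fun x => 1 - (1 - x) ^ (m + 2) * (1 + c * x) with hD
  set F : ℝ → ℝ := fun x => 2 * D x - c * (c + 1) * x ^ 2 * (1 - x) ^ (m + 1) with hF
  -- positivity of denominator
  have hDpos : ∀ x ∈ Ioc (0 : ℝ) 1, 0 < D x := by
    intro x hx
    obtain ⟨hx0, hx1⟩ := hx
    have h1 : (1 : ℝ) + c * x ≤ (1 + x) ^ (m + 2) := by
      have := one_add_mul_le_pow (a := x) (by linarith) (m + 2)
      push_cast at this
      simpa [hc] using this
    have h2 : (1 - x) ^ (m + 2) * (1 + c * x) ≤ ((1 - x) * (1 + x)) ^ (m + 2) := by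
      rw [mul_pow]
      exact mul_le_mul_of_nonneg_left h1 (pow_nonneg (by linarith) _)
    have h3 : ((1 - x) * (1 + x)) ^ (m + 2) < 1 := by
      apply pow_lt_one₀ (by nlinarith) (by nlinarith) (by omega)
    simp only [hD]
    nlinarith
  -- derivative of D
  have hDderiv : ∀ x : ℝ, HasDerivAt D (c * (c + 1) * x * (1 - x) ^ (m + 1)) x := by
    intro x
    have h1 : HasDerivAt (fun x : ℝ => 1 - x) (-1) x := by
      simpa using (hasDerivAt_id x).const_sub 1
    have h2 : HasDerivAt (fun x : ℝ => (1 - x) ^ (m + 2))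
        (((m + 2 : ℕ) : ℝ) * (1 - x) ^ (m + 1) * (-1)) x := by
      simpa using h1.fun_pow (m + 2)
    have h3 : HasDerivAt (fun x : ℝ => 1 + c * x) c x := by
      simpa using ((hasDerivAt_id x).const_mul c).const_add 1
    have h4 := (h2.fun_mul h3).const_sub 1
    refine h4.congr_deriv ?_
    have : (1 - x) ^ (m + 2) = (1 - x) ^ (m + 1) * (1 - x) := by ring
    rw [hcast, this]
    ring
  -- derivative of F
  have hFderiv : ∀ x : ℝ, HasDerivAt F (c * (c + 1) * ((m : ℝ) + 1) * x ^ 2 * (1 - x) ^ m) x := by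
    intro x
    have h1 : HasDerivAt (fun x : ℝ => 1 - x) (-1) x := by
      simpa using (hasDerivAt_id x).const_sub 1
    have h2 : HasDerivAt (fun x : ℝ => (1 - x) ^ (m + 1))
        (((m + 1 : ℕ) : ℝ) * (1 - x) ^ m * (-1)) x := by
      simpa using h1.fun_pow (m + 1)
    have h3 : HasDerivAt (fun x : ℝ => x ^ 2) (2 * x) x := by
      simpa using hasDerivAt_pow 2 x
    have h4 := (h3.const_mul (c * (c + 1))).mul h2
    have h5 : HasDerivAt F
        (2 * (c * (c + 1) * x * (1 - x) ^ (m + 1)) -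
          (c * (c + 1) * (2 * x) * (1 - x) ^ (m + 1) +
            c * (c + 1) * x ^ 2 * (((m + 1 : ℕ) : ℝ) * (1 - x) ^ m * -1))) x :=
      ((hDderiv x).const_mul 2).sub h4
    convert h5 using 1
    have h6 : (1 - x) ^ (m + 1) = (1 - x) ^ m * (1 - x) := by ring
    rw [h6]
    push_cast
    ring
  -- F is strictly monotone on [0,1]
  have hFmono : StrictMonoOn F (Icc (0 : ℝ) 1) := by
    apply strictMonoOn_of_deriv_pos (convex_Icc 0 1)
    · exact Continuous.continuousOn (by fun_prop)
    · intro x hx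
      rw [interior_Icc] at hx
      rw [(hFderiv x).deriv]
      have h1 : (0 : ℝ) < x ^ 2 := pow_pos hx.1 2
      have h2 : (0 : ℝ) < (1 - x) ^ m := pow_pos (by linarith [hx.2]) m
      have h3 : (0 : ℝ) < c := by rw [hc]; positivity
      have h4 : (0 : ℝ) < (m : ℝ) + 1 := by positivity
      exact mul_pos (mul_pos (mul_pos (mul_pos h3 (by linarith)) h4) h1) h2
  have hF0 : F 0 = 0 := by simp [hF, hD]
  have hFpos : ∀ x ∈ Ioo (0 : ℝ) 1, 0 < F x := by
    intro x hx
    have := hFmono (left_mem_Icc.mpr zero_le_one) ⟨le_of_lt hx.1, le_of_lt hx.2⟩ hx.1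
    rwa [hF0] at this
  -- main
  have hgoal : (fun x : ℝ => x ^ 2 / (1 - (1 - x) ^ (m + 2) * (1 + ((m + 2 : ℕ) : ℝ) * x)))
      = fun x : ℝ => x ^ 2 / D x := by
    funext x
    rw [hcast]
  rw [hgoal]
  apply strictMonoOn_of_deriv_pos (convex_Ioc 0 1)
  · apply ContinuousOn.div
    · exact Continuous.continuousOn (by fun_prop)
    · exact Continuous.continuousOn (by fun_prop)
    · exact fun x hx => (hDpos x hx).ne'
  · intro x hx
    rw [interior_Ioc] at hx
    have hxIoc : x ∈ Ioc (0 : ℝ) 1 := ⟨hx.1, le_of_lt hx.2⟩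
    have hnum : HasDerivAt (fun x : ℝ => x ^ 2) (2 * x) x := by
      simpa using hasDerivAt_pow 2 x
    have hd := hnum.fun_div (hDderiv x) (hDpos x hxIoc).ne'
    rw [hd.deriv]
    apply div_pos
    · have : 2 * x * D x - x ^ 2 * (c * (c + 1) * x * (1 - x) ^ (m + 1)) = x * F x := by
        simp only [hF]; ring
      rw [this]
      exact mul_pos hx.1 (hFpos x hx)
    · exact pow_pos (hDpos x hxIoc) 2
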